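/- Let f : [0,ℓ] → ℝ solve the scalar Jacobi equation f'' + K(t)f = 0 with K(t) ≤ K⁺ for all t, where K⁺ > 0, f(0) = 0, f'(0) > 0. Then f is strictly increasing on [0, π/(2√K⁺)) ∩ [0,ℓ]; i.e., f'(t) > 0 for all t in that interval. -/

import Mathlib

open Set

/-- Let `f` solve the scalar Jacobi equation `f'' + K f = 0` on `[0,ℓ]` with
`K ≤ K⁺`, `K⁺ > 0`, `f 0 = 0`, `f' 0 > 0`.  Then `f' t > 0` (so `f` is strictly
increasing) on `[0, π/(2√K⁺)) ∩ [0,ℓ]`. -/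
theorem stmt_17 (ℓ Kp : ℝ) (hℓ : 0 ≤ ℓ) (hKp : 0 < Kp) (K f f' : ℝ → ℝ)
    (hKcont : ContinuousOn K (Icc 0 ℓ))
    (hK : ∀ t ∈ Icc 0 ℓ, K t ≤ Kp)
    (hf : ∀ t ∈ Icc 0 ℓ, HasDerivAt f (f' t) t)
    (hf' : ∀ t ∈ Icc 0 ℓ, HasDerivAt f' (-(K t) * f t) t)
    (hf0 : f 0 = 0) (hf'0 : 0 < f' 0) :
    ∀ t ∈ Icc 0 ℓ, t < Real.pi / (2 * Real.sqrt Kp) → 0 < f' t := by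
  intro t ht htL
  by_contra hcon
  push_neg at hcon
  set c := Real.sqrt Kp with hcdef
  have hc : 0 < c := Real.sqrt_pos.2 hKp
  have hc2 : c * c = Kp := Real.mul_self_sqrt hKp.le
  have hsub : Icc (0:ℝ) t ⊆ Icc 0 ℓ := Icc_subset_Icc le_rfl ht.2
  have hcontf' : ContinuousOn f' (Icc 0 t) := fun u hu =>
    ((hf' u (hsub hu)).continuousAt).continuousWithinAt
  set S : Set ℝ := Icc 0 t ∩ f' ⁻¹' Iic 0 with hS
  have hScl : IsClosed S :=
    hcontf'.preimage_isClosed_of_isClosed isClosed_Icc isClosed_Iic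
  have htS : t ∈ S := ⟨⟨ht.1, le_rfl⟩, hcon⟩
  have hSne : S.Nonempty := ⟨t, htS⟩
  have hSbdd : BddBelow S := ⟨0, fun u hu => hu.1.1⟩
  set t0 := sInf S with ht0def
  have ht0S : t0 ∈ S := hScl.csInf_mem hSne hSbdd
  have ht0Icc : t0 ∈ Icc 0 t := ht0S.1
  have ht0f' : f' t0 ≤ 0 := ht0S.2
  have ht0pos : 0 < t0 := by
    rcases lt_or_eq_of_le ht0Icc.1 with h | h
    · exact h
    · exfalso; rw [← h] at ht0f'; linarith
  have hpos : ∀ u ∈ Ico (0:ℝ) t0, 0 < f' u := by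
    intro u hu
    by_contra h
    push_neg at h
    have huS : u ∈ S := ⟨⟨hu.1, hu.2.le.trans ht0Icc.2⟩, h⟩
    exact absurd (csInf_le hSbdd huS) (not_le.2 hu.2)
  have hsub0 : Icc (0:ℝ) t0 ⊆ Icc 0 ℓ := Icc_subset_Icc le_rfl (ht0Icc.2.trans ht.2)
  have hfc : ContinuousOn f (Icc 0 t0) := fun u hu =>
    ((hf u (hsub0 hu)).continuousAt).continuousWithinAt
  have hmono : StrictMonoOn f (Icc 0 t0) := by
    apply strictMonoOn_of_deriv_pos (convex_Icc 0 t0) hfc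
    intro x hx
    rw [interior_Icc] at hx
    rw [(hf x (hsub0 ⟨hx.1.le, hx.2.le⟩)).deriv]
    exact hpos x ⟨hx.1.le, hx.2⟩
  have hfnonneg : ∀ u ∈ Icc (0:ℝ) t0, 0 ≤ f u := by
    intro u hu
    rcases eq_or_lt_of_le hu.1 with h | h
    · rw [← h, hf0]
    · have := hmono (left_mem_Icc.2 ht0pos.le) hu h
      rw [hf0] at this; exact this.le
  have hft0pos : 0 < f t0 := by
    have := hmono (left_mem_Icc.2 ht0pos.le) (right_mem_Icc.2 ht0pos.le) ht0pos
    rwa [hf0] at this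
  have hangle : ∀ u ∈ Icc (0:ℝ) t0, c * u < Real.pi / 2 := by
    intro u hu
    have h1 : c * u ≤ c * t := by nlinarith [hu.2, ht0Icc.2]
    have h2 : c * t < c * (Real.pi / (2 * c)) := mul_lt_mul_of_pos_left htL hc
    have h3 : c * (Real.pi / (2 * c)) = Real.pi / 2 := by field_simp
    linarith
  set W : ℝ → ℝ := fun u => f' u * Real.sin (c * u) - f u * (c * Real.cos (c * u))
    with hWdef
  have hWderiv : ∀ u ∈ Icc (0:ℝ) ℓ,
      HasDerivAt W ((Kp - K u) * (f u * Real.sin (c * u))) u := by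
    intro u hu
    have hid : HasDerivAt (fun x : ℝ => c * x) (c * 1) u := (hasDerivAt_id u).const_mul c
    have hsin : HasDerivAt (fun x => Real.sin (c * x)) (Real.cos (c * u) * (c * 1)) u :=
      (Real.hasDerivAt_sin (c * u)).comp u hid
    have hcos : HasDerivAt (fun x => Real.cos (c * x)) (-Real.sin (c * u) * (c * 1)) u :=
      (Real.hasDerivAt_cos (c * u)).comp u hid
    have h1 := (hf' u hu).mul hsin
    have h2 := (hf u hu).mul (hcos.const_mul c)
    have := h1.sub h2
    refine this.congr_deriv ?_
    linear_combination (f u * Real.sin (c * u)) * hc2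
  have hWcont : ContinuousOn W (Icc 0 t0) := fun u hu =>
    ((hWderiv u (hsub0 hu)).continuousAt).continuousWithinAt
  have hWmono : MonotoneOn W (Icc 0 t0) := by
    apply monotoneOn_of_deriv_nonneg (convex_Icc 0 t0) hWcont
    · intro x hx
      rw [interior_Icc] at hx
      exact ((hWderiv x (hsub0 ⟨hx.1.le, hx.2.le⟩)).differentiableAt).differentiableWithinAt
    · intro x hx
      rw [interior_Icc] at hx
      have hxI : x ∈ Icc (0:ℝ) t0 := ⟨hx.1.le, hx.2.le⟩
      rw [(hWderiv x (hsub0 hxI)).deriv]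
      have h1 : 0 ≤ Kp - K x := by linarith [hK x (hsub0 hxI)]
      have h2 : 0 ≤ f x := hfnonneg x hxI
      have h3 : 0 ≤ Real.sin (c * x) := by
        apply Real.sin_nonneg_of_nonneg_of_le_pi
        · exact mul_nonneg hc.le hxI.1
        · have := hangle x hxI
          linarith [Real.pi_pos]
      exact mul_nonneg h1 (mul_nonneg h2 h3)
  have hW0 : W 0 = 0 := by simp [hWdef, hf0]
  have hWt0 : 0 ≤ W t0 := by
    have := hWmono (left_mem_Icc.2 ht0pos.le) (right_mem_Icc.2 ht0pos.le) ht0pos.le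
    rwa [hW0] at this
  have hsinpos : 0 < Real.sin (c * t0) := by
    apply Real.sin_pos_of_pos_of_lt_pi
    · exact mul_pos hc ht0pos
    · have := hangle t0 (right_mem_Icc.2 ht0pos.le)
      linarith [Real.pi_pos]
  have hcospos : 0 < Real.cos (c * t0) := by
    apply Real.cos_pos_of_mem_Ioo
    constructor
    · have : 0 < c * t0 := mul_pos hc ht0pos
      linarith [Real.pi_pos]
    · exact hangle t0 (right_mem_Icc.2 ht0pos.le)
  have : W t0 < 0 := by
    have h1 : f' t0 * Real.sin (c * t0) ≤ 0 := mul_nonpos_of_nonpos_of_nonneg ht0f' hsinpos.le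
    have h2 : 0 < f t0 * (c * Real.cos (c * t0)) := mul_pos hft0pos (mul_pos hc hcospos)
    simp only [hWdef]
    linarith
  linarith
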